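/- Let F = {1,…,K} and C the set of subsets of F. Let λ : C → [0,∞), U_s ≥ 0, μ > 0, and γ > μ (allowing γ = ∞ with μ/γ = 0). For S ⊊ F define Δ_S := Σ_{C ⊆ S} λ_C − (U_s + Σ_{C ⊄ S} λ_C(K − |C| + μ/γ))/(1 − μ/γ). Then Δ_S < 0 for every proper subset S of F if and only if Δ_{F−{k}} < 0 for every k ∈ F. -/
import Mathlib


open Finset

/-- `Δ_S < 0` for every proper subset `S` of `F` iff
`Δ_{F-{k}} < 0` for every `k ∈ F`.  Here `ρ` stands for `μ/γ` (with `ρ = 0`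
allowed, corresponding to `γ = ∞`), and `0 ≤ ρ < 1` since `0 < μ < γ`. -/
theorem delta_neg_iff_maximal_subsets
    (K : ℕ) (hK : 1 ≤ K) (lam : Finset (Fin K) → ℝ) (hlam : ∀ C, 0 ≤ lam C)
    (Us : ℝ) (hUs : 0 ≤ Us) (ρ : ℝ) (hρ0 : 0 ≤ ρ) (hρ1 : ρ < 1)
    (Δ : Finset (Fin K) → ℝ)
    (hΔ : ∀ S, Δ S =
      (∑ C ∈ Finset.univ.filter (fun C => C ⊆ S), lam C)
        - (Us + ∑ C ∈ Finset.univ.filter (fun C => ¬ C ⊆ S),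
            lam C * ((K : ℝ) - C.card + ρ)) / (1 - ρ)) :
    (∀ S : Finset (Fin K), S ≠ Finset.univ → Δ S < 0) ↔
      (∀ k : Fin K, Δ (Finset.univ.erase k) < 0) := by
  have h1ρ : (0:ℝ) < 1 - ρ := by linarith
  constructor
  · intro h k
    exact h _ (by simp [Finset.erase_eq_self, Finset.eq_univ_iff_forall])
  · intro h S hS
    obtain ⟨k, hk⟩ : ∃ k, k ∉ S := by
      by_contra hc; push_neg at hc
      exact hS (Finset.eq_univ_of_forall hc)
    have hsub : S ⊆ Finset.univ.erase k := fun x hx =>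
      Finset.mem_erase.mpr ⟨fun he => hk (he ▸ hx), Finset.mem_univ x⟩
    have hle : Δ S ≤ Δ (Finset.univ.erase k) := by
      rw [hΔ, hΔ]
      have h1 : (∑ C ∈ Finset.univ.filter (fun C => C ⊆ S), lam C)
          ≤ ∑ C ∈ Finset.univ.filter (fun C => C ⊆ Finset.univ.erase k), lam C := by
        apply Finset.sum_le_sum_of_subset_of_nonneg
        · intro C hC
          simp only [Finset.mem_filter, Finset.mem_univ, true_and] at hC ⊢
          exact hC.trans hsub
        · intros; exact hlam _
      have h2 : (∑ C ∈ Finset.univ.filter (fun C => ¬ C ⊆ Finset.univ.erase k),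
            lam C * ((K : ℝ) - C.card + ρ))
          ≤ ∑ C ∈ Finset.univ.filter (fun C => ¬ C ⊆ S),
            lam C * ((K : ℝ) - C.card + ρ) := by
        apply Finset.sum_le_sum_of_subset_of_nonneg
        · intro C hC
          simp only [Finset.mem_filter, Finset.mem_univ, true_and] at hC ⊢
          exact fun h' => hC (h'.trans hsub)
        · intro C _ _
          apply mul_nonneg (hlam _)
          have : C.card ≤ K := by
            simpa using Finset.card_le_univ C
          have : (C.card : ℝ) ≤ K := by exact_mod_cast this
          linarith
      gcongr
    exact lt_of_le_of_lt hle (h k)
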